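/- Given compositions α of n, and a splitting point 0 ≤ m ≤ n, there is exactly one pair of compositions (β, γ) with |β| = m, |γ| = n − m, and either β·γ = α (concatenation) or β⊙γ = α (near-concatenation). -/
import Mathlib


/-- Near-concatenation of compositions: merge the last part of `β` with the first part
of `γ` (intended for nonempty `β`, `γ`). -/
def nearConcat (β γ : List ℕ) : List ℕ :=
  β.dropLast ++ (β.getLastD 0 + γ.headD 0) :: γ.tail

lemma sum_pos_nil {l : List ℕ} (h : ∀ x ∈ l, 0 < x) (hs : l.sum = 0) : l = [] := by
  cases l with
  | nil => rfl
  | cons a t =>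
    have := h a (by simp)
    simp [List.sum_cons] at hs
    omega

lemma nearConcat_cons (b : ℕ) (β' γ : List ℕ) (h : β' ≠ []) :
    nearConcat (b :: β') γ = b :: nearConcat β' γ := by
  cases β' with
  | nil => exact absurd rfl h
  | cons x t =>
    simp [nearConcat, List.getLastD_eq_getLast?, List.getLast?_cons_cons]

lemma nearConcat_single (b c : ℕ) (γ' : List ℕ) :
    nearConcat [b] (c :: γ') = (b + c) :: γ' := by
  simp [nearConcat]

lemma key (α : List ℕ) : ∀ m, (∀ x ∈ α, 0 < x) → m ≤ α.sum →
    ∃! p : List ℕ × List ℕ,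
      (∀ x ∈ p.1, 0 < x) ∧ (∀ x ∈ p.2, 0 < x) ∧ p.1.sum = m ∧ p.2.sum = α.sum - m ∧
      (p.1 ++ p.2 = α ∨ (p.1 ≠ [] ∧ p.2 ≠ [] ∧ nearConcat p.1 p.2 = α)) := by
  induction α with
  | nil =>
    intro m _ hm
    simp at hm
    subst hm
    refine ⟨([], []), ⟨by simp, by simp, by simp, by simp, Or.inl rfl⟩, ?_⟩
    rintro ⟨β, γ⟩ ⟨h1, h2, h3, h4, _⟩
    dsimp only at h1 h2 h3 h4
    have hβ := sum_pos_nil h1 h3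
    have hγ := sum_pos_nil h2 (by simpa using h4)
    simp only [Prod.mk.injEq]
    exact ⟨hβ, hγ⟩
  | cons a α' ih =>
    intro m hpos hm
    have ha : 0 < a := hpos a (by simp)
    have hpos' : ∀ x ∈ α', 0 < x := fun x hx => hpos x (by simp [hx])
    simp [List.sum_cons] at hm
    rcases Nat.lt_or_ge m a with hma | hma
    · rcases Nat.eq_zero_or_pos m with hm0 | hm0
      · -- m = 0
        subst hm0
        refine ⟨([], a :: α'), ⟨by simp, hpos, by simp, by simp, Or.inl rfl⟩, ?_⟩
        rintro ⟨β, γ⟩ ⟨h1, h2, h3, h4, h5⟩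
        dsimp only at h1 h2 h3 h4 h5
        have hβ := sum_pos_nil h1 h3
        subst hβ
        rcases h5 with h5 | ⟨hne, _, _⟩
        · simpa using h5
        · exact absurd rfl hne
      · -- 0 < m < a : near-concat splitting the first part
        refine ⟨([m], (a - m) :: α'), ⟨by simpa using hm0, ?_, by simp,
            by simp [List.sum_cons]; omega, Or.inr ⟨by simp, by simp, ?_⟩⟩, ?_⟩
        · intro x hx
          rcases List.mem_cons.mp hx with rfl | hx
          · omega
          · exact hpos' x hx
        · rw [nearConcat_single]
          congr 1
          omega
        · rintro ⟨β, γ⟩ ⟨h1, h2, h3, h4, h5⟩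
          dsimp only at h1 h2 h3 h4 h5
          obtain ⟨b, β', rfl⟩ : ∃ b β', β = b :: β' := by
            cases β with
            | nil => simp at h3; omega
            | cons b β' => exact ⟨b, β', rfl⟩
          simp [List.sum_cons] at h3
          rcases h5 with h5 | ⟨_, hγne, h5⟩
          · -- concatenation impossible: b = a forces m ≥ a
            simp at h5
            obtain ⟨rfl, -⟩ := h5
            omega
          · obtain ⟨c, γ', rfl⟩ : ∃ c γ', γ = c :: γ' := by
              cases γ with
              | nil => exact absurd rfl hγne
              | cons c γ' => exact ⟨c, γ', rfl⟩
            cases β' with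
            | nil =>
              rw [nearConcat_single] at h5
              simp at h5
              obtain ⟨hbc, rfl⟩ := h5
              have hc : 0 < c := h2 c (by simp)
              simp at h3
              have hb : b = m := by omega
              have hc' : c = a - m := by omega
              simp [hb, hc']
            | cons b' β'' =>
              rw [nearConcat_cons b _ _ (by simp)] at h5
              have hb : b = a := (List.cons.injEq _ _ _ _ ▸ h5).1
              have hβ'' : 0 < b' := h1 b' (by simp)
              simp [List.sum_cons] at h3
              omega
    · -- a ≤ m : recurse on α'
      obtain ⟨q, ⟨hq1, hq2, hq3, hq4, hq5⟩, huniq⟩ := ih (m - a) hpos' (by omega)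
      refine ⟨(a :: q.1, q.2), ⟨?_, hq2, ?_, ?_, ?_⟩, ?_⟩
      · intro x hx
        rcases List.mem_cons.mp hx with rfl | hx
        · exact ha
        · exact hq1 x hx
      · simp [List.sum_cons, hq3]; omega
      · simp [List.sum_cons, hq4]; omega
      · rcases hq5 with h | ⟨hne1, hne2, h⟩
        · exact Or.inl (by simp [h])
        · exact Or.inr ⟨by simp, hne2, by rw [nearConcat_cons _ _ _ hne1, h]⟩
      · rintro ⟨β, γ⟩ ⟨h1, h2, h3, h4, h5⟩
        dsimp only at h1 h2 h3 h4 h5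
        obtain ⟨b, β', rfl⟩ : ∃ b β', β = b :: β' := by
          cases β with
          | nil => simp at h3; omega
          | cons b β' => exact ⟨b, β', rfl⟩
        simp [List.sum_cons] at h3
        rcases h5 with h5 | ⟨_, hγne, h5⟩
        · -- concatenation case
          simp at h5
          obtain ⟨rfl, h5⟩ := h5
          have hs1 : β'.sum = m - b := by omega
          have hs2 : γ.sum = α'.sum - (m - b) := by
            simp only [List.sum_cons] at h4; omega
          have hq : (β', γ) = q := huniq (β', γ)
            ⟨fun x hx => h1 x (by simp [hx]), h2, hs1, hs2, Or.inl h5⟩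
          have e1 : β' = q.1 := by rw [← hq]
          have e2 : γ = q.2 := by rw [← hq]
          simp [e1, e2]
        · obtain ⟨c, γ', rfl⟩ : ∃ c γ', γ = c :: γ' := by
            cases γ with
            | nil => exact absurd rfl hγne
            | cons c γ' => exact ⟨c, γ', rfl⟩
          cases β' with
          | nil =>
            rw [nearConcat_single] at h5
            simp at h5
            obtain ⟨hbc, rfl⟩ := h5
            have hc : 0 < c := h2 c (by simp)
            simp at h3
            omega
          | cons b' β'' =>
            rw [nearConcat_cons b _ _ (by simp)] at h5
            simp only [List.cons.injEq] at h5
            obtain ⟨rfl, h5⟩ := h5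
            have hs1 : (b' :: β'').sum = m - b := by
              simp only [List.sum_cons] at h3 ⊢; omega
            have hs2 : (c :: γ').sum = α'.sum - (m - b) := by
              simp only [List.sum_cons] at h4 ⊢; omega
            have hq : (b' :: β'', c :: γ') = q := huniq (b' :: β'', c :: γ')
              ⟨fun x hx => h1 x (by simp [hx]), h2, hs1, hs2,
               Or.inr ⟨by simp, by simp, h5⟩⟩
            have e1 : b' :: β'' = q.1 := by rw [← hq]
            have e2 : c :: γ' = q.2 := by rw [← hq]
            simp [← e1, ← e2]

theorem existsUnique_split (n m : ℕ) (α : List ℕ)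
    (hα : ∀ x ∈ α, 0 < x) (hsum : α.sum = n) (hm : m ≤ n) :
    ∃! p : List ℕ × List ℕ,
      (∀ x ∈ p.1, 0 < x) ∧ (∀ x ∈ p.2, 0 < x) ∧ p.1.sum = m ∧ p.2.sum = n - m ∧
      (p.1 ++ p.2 = α ∨ (p.1 ≠ [] ∧ p.2 ≠ [] ∧ nearConcat p.1 p.2 = α)) := by
  subst hsum
  exact key α m hα hm
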